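/- Bang's lemma: Let M be a k×k real symmetric matrix with all diagonal entries equal to 1, let γ_1,...,γ_k ∈ ℝ, and let θ ≥ 0. Then there exists a sign vector ε ∈ {-1,1}^k such that for every i ∈ [k], |θ(Mε)_i - γ_i| ≥ θ. -/

import Mathlib

open Matrix

/-- Bang's lemma: for a real symmetric `k × k` matrix `M` with unit diagonal,
`γ ∈ ℝᵏ` and `θ ≥ 0`, there is `ε ∈ {-1,1}ᵏ` with `|θ(Mε)_i - γ_i| ≥ θ` for all `i`. -/
theorem bang_lemma (k : ℕ) (M : Matrix (Fin k) (Fin k) ℝ)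
    (hsymm : M.IsSymm) (hdiag : ∀ i, M i i = 1)
    (γ : Fin k → ℝ) (θ : ℝ) (hθ : 0 ≤ θ) :
    ∃ ε : Fin k → ℝ, (∀ i, ε i = 1 ∨ ε i = -1) ∧
      ∀ i, |θ * (M.mulVec ε) i - γ i| ≥ θ := by
  classical
  set S : Finset (Fin k → ℝ) := Fintype.piFinset (fun _ => ({1, -1} : Finset ℝ)) with hS
  have hSne : S.Nonempty := ⟨fun _ => 1, by simp [hS]⟩
  set F : (Fin k → ℝ) → ℝ := fun ε => θ * (ε ⬝ᵥ M.mulVec ε) - 2 * (γ ⬝ᵥ ε) with hF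
  obtain ⟨ε, hεS, hmax⟩ := S.exists_max_image F hSne
  have hsign : ∀ i, ε i = 1 ∨ ε i = -1 := by
    intro i
    have := Fintype.mem_piFinset.mp hεS i
    simpa using this
  refine ⟨ε, hsign, fun i => ?_⟩
  -- flipped vector
  set ε' : Fin k → ℝ := Function.update ε i (-(ε i)) with hε'
  have hε'S : ε' ∈ S := by
    rw [Fintype.mem_piFinset]
    intro j
    by_cases hj : j = i
    · subst hj
      rcases hsign j with h | h <;> simp [hε', h]
    · simpa [hε', Function.update_of_ne hj] using Fintype.mem_piFinset.mp hεS j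
  have hle : F ε' ≤ F ε := hmax ε' hε'S
  set c : ℝ := -(2 * ε i) with hc
  have hεsq : ε i * ε i = 1 := by rcases hsign i with h | h <;> rw [h] <;> ring
  have hdecomp : ε' = ε + c • ((Pi.single i (1 : ℝ)) : Fin k → ℝ) := by
    funext j
    by_cases hj : j = i
    · subst hj; simp [hε', hc]; ring
    · simp [hε', Function.update_of_ne hj, Pi.single_eq_of_ne hj]
  -- key dot product facts
  have hMe : M.mulVec (Pi.single i (1 : ℝ)) = fun j => M j i := by
    rw [Matrix.mulVec_single]; funext j; simp
  have h1 : ε ⬝ᵥ M.mulVec (Pi.single i (1 : ℝ)) = M.mulVec ε i := by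
    rw [hMe]
    simp only [dotProduct, Matrix.mulVec, dotProduct]
    apply Finset.sum_congr rfl
    intro j _
    have : M j i = M i j := by
      conv_lhs => rw [← hsymm]
      rfl
    rw [this]; ring
  have h2 : Pi.single i (1 : ℝ) ⬝ᵥ M.mulVec ε = M.mulVec ε i := by
    rw [single_dotProduct, one_mul]
  have h3 : Pi.single i (1 : ℝ) ⬝ᵥ M.mulVec (Pi.single i (1 : ℝ)) = 1 := by
    rw [single_dotProduct, one_mul, hMe]
    simp [hdiag i]
  have h4 : γ ⬝ᵥ Pi.single i (1 : ℝ) = γ i := by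
    rw [dotProduct_single, mul_one]
  have hFε' : F ε' = F ε + θ * (2 * c * M.mulVec ε i + c * c) - 2 * (c * γ i) := by
    rw [hF]
    simp only [hdecomp, Matrix.mulVec_add, Matrix.mulVec_smul, add_dotProduct,
      dotProduct_add, smul_dotProduct, dotProduct_smul,
      smul_eq_mul, h1, h2, h3, h4]
    ring
  have hcc : c * c = 4 := by rw [hc]; nlinarith [hεsq]
  have hkey : θ * ε i * M.mulVec ε i - ε i * γ i ≥ θ := by
    rw [hFε'] at hle
    rw [hc] at hle hcc
    nlinarith [hle, hcc]
  have habs : ε i * (θ * M.mulVec ε i - γ i) ≥ θ := by nlinarith [hkey]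
  calc θ ≤ ε i * (θ * M.mulVec ε i - γ i) := habs
    _ ≤ |ε i * (θ * M.mulVec ε i - γ i)| := le_abs_self _
    _ = |θ * M.mulVec ε i - γ i| := by
        rw [abs_mul]
        rcases hsign i with h | h <;> simp [h]
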